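/- If an [n,k] code C admits a PIR achievable rate matrix Λ_{κ,ν} with κ/ν = k/n (an MDS-PIR capacity-achieving matrix), then the s-th generalized Hamming weight satisfies d_s^C ≥ (n/k)·s for all s ∈ {1,...,k}. -/

import Mathlib

/-- `I` is an information set of the `[n,k]` code `C`: it has size `k` and a codeword
vanishing on `I` is zero (so the projection of `C` onto the coordinates in `I` is a
bijection onto `F^I`). -/
def IsInfoSet {F : Type*} [Field F] {n : ℕ} (C : Submodule F (Fin n → F)) (k : ℕ)
    (I : Finset (Fin n)) : Prop :=
  I.card = k ∧ ∀ x ∈ C, (∀ j ∈ I, x j = 0) → x = 0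

/-- `Λ` is a PIR achievable rate matrix for the `[n,k]` code `C`: every column has
Hamming weight `κ` and the support of every row contains an information set. -/
def IsPIRMatrix {F : Type*} [Field F] {n ν : ℕ} (C : Submodule F (Fin n → F))
    (k κ : ℕ) (Λ : Fin ν → Fin n → Bool) : Prop :=
  (∀ j, (Finset.univ.filter fun u => Λ u j = true).card = κ) ∧
  ∀ u, ∃ I : Finset (Fin n), (∀ j ∈ I, Λ u j = true) ∧ IsInfoSet C k I

/-- The `s`-th generalized Hamming weight of the code `C`: the smallest support size of
an `s`-dimensional subcode of `C`. -/
noncomputable def genHammingWeight {F : Type*} [Field F] {n : ℕ}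
    (C : Submodule F (Fin n → F)) (s : ℕ) : ℕ :=
  sInf {c | ∃ D : Submodule F (Fin n → F), D ≤ C ∧ Module.finrank F D = s ∧
    c = Set.ncard {j | ∃ x ∈ D, x j ≠ 0}}

open Classical in
/-- An `s`-dimensional subcode has at least `s` support coordinates inside any
"information set"-like set `I`. -/
lemma aux_support_card {F : Type*} [Field F] {n : ℕ} (D : Submodule F (Fin n → F))
    {s : ℕ} (hD : Module.finrank F D = s) (I : Finset (Fin n))
    (hI : ∀ x ∈ D, (∀ j ∈ I, x j = 0) → x = 0) :
    s ≤ (I.filter fun j => ∃ x ∈ D, x j ≠ 0).card := by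
  classical
  set J := I.filter fun j => ∃ x ∈ D, x j ≠ 0 with hJ
  let L : D →ₗ[F] ({j // j ∈ J} → F) :=
    LinearMap.pi fun j : {j // j ∈ J} => (LinearMap.proj (j : Fin n)).comp D.subtype
  have hinj : Function.Injective L := by
    rw [← LinearMap.ker_eq_bot, LinearMap.ker_eq_bot']
    intro m hm
    have hz : ∀ j ∈ I, (m : Fin n → F) j = 0 := by
      intro j hjI
      by_cases hjJ : j ∈ J
      · exact congrFun hm ⟨j, hjJ⟩
      · rw [hJ, Finset.mem_filter] at hjJ
        push_neg at hjJ
        exact hjJ hjI m m.2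
    have := hI m m.2 hz
    exact Subtype.ext this
  have hle := LinearMap.finrank_le_finrank_of_injective hinj
  rw [hD, Module.finrank_fintype_fun_eq_card, Fintype.card_coe] at hle
  exact hle

/-- if an `[n,k]` code admits an MDS-PIR capacity-achieving matrix
(`κ/ν = k/n`), then `d_s ≥ (n/k)·s` for all `s ∈ {1,…,k}`. -/
theorem genHammingWeight_lower_bound_of_capacity_achieving {F : Type*} [Field F]
    {n ν k κ : ℕ} (C : Submodule F (Fin n → F)) (hk : Module.finrank F C = k)
    (Λ : Fin ν → Fin n → Bool) (hν : 0 < ν) (h : IsPIRMatrix C k κ Λ)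
    (hratio : κ * n = k * ν) :
    ∀ s : ℕ, 1 ≤ s → s ≤ k →
      ((n : ℚ) / k) * s ≤ (genHammingWeight C s : ℚ) := by
  classical
  intro s hs1 hsk
  have hkpos : 0 < k := lt_of_lt_of_le hs1 hsk
  -- Nonemptiness of the defining set
  set S : Set ℕ := {c | ∃ D : Submodule F (Fin n → F), D ≤ C ∧ Module.finrank F D = s ∧
    c = Set.ncard {j | ∃ x ∈ D, x j ≠ 0}} with hS
  have hne : S.Nonempty := by
    have : FiniteDimensional F C := inferInstance
    let b : Module.Basis (Fin k) F C := (Module.finBasis F C).reindex (finCongr hk)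
    let v : Fin s → (Fin n → F) := fun i => (b (Fin.castLE hsk i) : Fin n → F)
    have hli : LinearIndependent F v := by
      have h1 : LinearIndependent F (b ∘ Fin.castLE hsk) :=
        b.linearIndependent.comp _ (Fin.castLE_injective hsk)
      exact h1.map' C.subtype C.ker_subtype
    refine ⟨_, Submodule.span F (Set.range v), ?_, ?_, rfl⟩
    · rw [Submodule.span_le]
      rintro _ ⟨i, rfl⟩
      exact (b (Fin.castLE hsk i)).2
    · rw [finrank_span_eq_card hli, Fintype.card_fin]
  -- The infimum is attained
  have hmem : genHammingWeight C s ∈ S := Nat.sInf_mem hne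
  obtain ⟨D, hDC, hfr, hcard⟩ := hmem
  set d := genHammingWeight C s with hd
  -- convert ncard to a Finset card
  set T : Finset (Fin n) := Finset.univ.filter fun j => ∃ x ∈ D, x j ≠ 0 with hT
  have hcard' : d = T.card := by
    rw [hcard, ← Set.ncard_coe_finset]
    congr 1
    ext j
    simp [hT]
  -- double counting
  have key : ν * s ≤ κ * T.card := by
    calc ν * s = ∑ _u : Fin ν, s := by simp [mul_comm]
      _ ≤ ∑ u : Fin ν, (T.filter fun j => Λ u j = true).card := by
          refine Finset.sum_le_sum fun u _ => ?_
          obtain ⟨I, hIΛ, hIcard, hIinfo⟩ := h.2 u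
          have h1 : ∀ x ∈ D, (∀ j ∈ I, x j = 0) → x = 0 :=
            fun x hx => hIinfo x (hDC hx)
          refine (aux_support_card D hfr I h1).trans (Finset.card_le_card ?_)
          intro j hj
          rw [Finset.mem_filter] at hj
          simp only [hT, Finset.mem_filter, Finset.mem_univ, true_and]
          exact ⟨hj.2, hIΛ j hj.1⟩
      _ = ∑ u : Fin ν, ∑ j ∈ T, (if Λ u j = true then 1 else 0) := by
          exact Finset.sum_congr rfl fun u _ => Finset.card_filter _ _
      _ = ∑ j ∈ T, ∑ u : Fin ν, (if Λ u j = true then 1 else 0) := Finset.sum_comm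
      _ = ∑ j ∈ T, κ := by
          refine Finset.sum_congr rfl fun j _ => ?_
          rw [← Finset.card_filter]
          exact h.1 j
      _ = κ * T.card := by simp [mul_comm]
  -- arithmetic
  have hnat : n * s ≤ k * d := by
    rw [hcard']
    have h1 : ν * (n * s) ≤ ν * (k * T.card) := by
      calc ν * (n * s) = n * (ν * s) := by ring
        _ ≤ n * (κ * T.card) := Nat.mul_le_mul_left n key
        _ = (κ * n) * T.card := by ring
        _ = (k * ν) * T.card := by rw [hratio]
        _ = ν * (k * T.card) := by ring
    exact Nat.le_of_mul_le_mul_left h1 hν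
  have hkQ : (0 : ℚ) < k := by exact_mod_cast hkpos
  rw [div_mul_eq_mul_div, div_le_iff₀ hkQ]
  have : ((n : ℚ) * s) = ((n * s : ℕ) : ℚ) := by push_cast; ring
  rw [this]
  calc ((n * s : ℕ) : ℚ) ≤ ((k * d : ℕ) : ℚ) := by exact_mod_cast hnat
    _ = (d : ℚ) * k := by push_cast; ring
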